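/- Let n ≥ k ≥ r ≥ 0, D ∈ ℝ^{n×k}, and X_⋄ ∈ 𝕆^{n×k} with rank(X_⋄ᵀD) = r. Let X_⋄ᵀD = UΣVᵀ be an SVD with U, V ∈ 𝕆^{k×k} orthogonal and Σ = diag(Σ₁, 0) where Σ₁ ∈ ℝ^{r×r} is diagonal positive definite; write U₁ = U_{(:,1:r)}, U₂ = U_{(:,r+1:k)}, V₁ = V_{(:,1:r)}, V₂ = V_{(:,r+1:k)}. Then for every W ∈ 𝕆^{(k−r)×(k−r)}, the matrix X = X_⋄U₁V₁ᵀ + X_⋄U₂WV₂ᵀ satisfies XᵀX = I_k, R(X) = R(X_⋄), and XᵀD is symmetric positive semidefinite. -/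
import Mathlib


open Matrix

def headCols {m : ℕ} (r : ℕ) (h : r ≤ m) (A : Matrix (Fin m) (Fin m) ℝ) :
    Matrix (Fin m) (Fin r) ℝ :=
  A.submatrix id (Fin.castLE h)

def tailCols {m : ℕ} (r : ℕ) (h : r ≤ m) (A : Matrix (Fin m) (Fin m) ℝ) :
    Matrix (Fin m) (Fin (m - r)) ℝ :=
  A.submatrix id fun j => Fin.cast (Nat.add_sub_cancel' h) (Fin.natAdd r j)

/-- The first `r` columns of the identity. -/
def Jh {k r : ℕ} (hrk : r ≤ k) : Matrix (Fin k) (Fin r) ℝ :=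
  (1 : Matrix (Fin k) (Fin k) ℝ).submatrix id (Fin.castLE hrk)

/-- The last `k - r` columns of the identity. -/
def Jt {k r : ℕ} (hrk : r ≤ k) : Matrix (Fin k) (Fin (k - r)) ℝ :=
  (1 : Matrix (Fin k) (Fin k) ℝ).submatrix id
    fun j => Fin.cast (Nat.add_sub_cancel' hrk) (Fin.natAdd r j)

lemma headCols_mul {k r : ℕ} (hrk : r ≤ k) (A : Matrix (Fin k) (Fin k) ℝ) :
    headCols r hrk A = A * Jh hrk := by
  ext i j
  simp [headCols, Jh, Matrix.mul_apply, Matrix.one_apply]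

lemma tailCols_mul {k r : ℕ} (hrk : r ≤ k) (A : Matrix (Fin k) (Fin k) ℝ) :
    tailCols r hrk A = A * Jt hrk := by
  ext i j
  simp [tailCols, Jt, Matrix.mul_apply, Matrix.one_apply]

lemma JhT_Jh {k r : ℕ} (hrk : r ≤ k) : (Jh hrk)ᵀ * Jh hrk = 1 := by
  ext i j
  simp only [Jh, Matrix.mul_apply, transpose_apply, submatrix_apply, id_eq, Matrix.one_apply,
    mul_ite, mul_one, mul_zero, Finset.sum_ite_eq', Finset.mem_univ, if_true]
  by_cases h : i = j
  · simp [h]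
  · simp [h, Fin.ext_iff]
    omega

lemma JtT_Jt {k r : ℕ} (hrk : r ≤ k) : (Jt hrk)ᵀ * Jt hrk = 1 := by
  ext i j
  simp only [Jt, Matrix.mul_apply, transpose_apply, submatrix_apply, id_eq, Matrix.one_apply,
    mul_ite, mul_one, mul_zero, Finset.sum_ite_eq', Finset.mem_univ, if_true]
  by_cases h : i = j
  · simp [h]
  · simp [h, Fin.ext_iff]
    omega

lemma JhT_Jt {k r : ℕ} (hrk : r ≤ k) : (Jh hrk)ᵀ * Jt hrk = 0 := by
  ext i j
  simp only [Jh, Jt, Matrix.mul_apply, transpose_apply, submatrix_apply, id_eq,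
    Matrix.one_apply, mul_ite, mul_one, mul_zero, Finset.sum_ite_eq', Finset.mem_univ,
    if_true, Matrix.zero_apply]
  rw [if_neg]
  rw [Fin.ext_iff]
  simp
  omega

lemma JtT_Jh {k r : ℕ} (hrk : r ≤ k) : (Jt hrk)ᵀ * Jh hrk = 0 := by
  have := congrArg Matrix.transpose (JhT_Jt hrk)
  simpa using this

lemma sum_split {k r : ℕ} (hrk : r ≤ k) (f : Fin k → ℝ) :
    ∑ l, f l = (∑ l : Fin r, f (Fin.castLE hrk l)) +
      ∑ l : Fin (k - r), f (Fin.cast (Nat.add_sub_cancel' hrk) (Fin.natAdd r l)) := by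
  have h1 : ∑ l : Fin (r + (k - r)), f (Fin.cast (Nat.add_sub_cancel' hrk) l) = ∑ l, f l :=
    Fintype.sum_equiv (finCongr (Nat.add_sub_cancel' hrk)) _ f (fun x => rfl)
  rw [← h1, Fin.sum_univ_add]
  refine congrArg₂ (· + ·) ?_ rfl
  exact Finset.sum_congr rfl fun x _ => congrArg f (by ext; simp)

lemma Jsum {k r : ℕ} (hrk : r ≤ k) : Jh hrk * (Jh hrk)ᵀ + Jt hrk * (Jt hrk)ᵀ = 1 := by
  ext i j
  have hs := sum_split hrk (fun m => (1 : Matrix (Fin k) (Fin k) ℝ) i m *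
    (1 : Matrix (Fin k) (Fin k) ℝ) j m)
  have h2 : ∑ l, (1 : Matrix (Fin k) (Fin k) ℝ) i l * (1 : Matrix (Fin k) (Fin k) ℝ) j l
      = (1 : Matrix (Fin k) (Fin k) ℝ) i j := by
    simp [Matrix.one_apply, Finset.sum_ite_eq]
  simp only [Matrix.add_apply, Jh, Jt, Matrix.mul_apply, transpose_apply, submatrix_apply]
  exact hs.symm.trans h2

/-- With rank(X_⋄ᵀD) = r and SVD X_⋄ᵀD = UΣVᵀ, for every orthogonal
W ∈ 𝕆^{(k−r)×(k−r)} the matrix X = X_⋄U₁V₁ᵀ + X_⋄U₂WV₂ᵀ has orthonormal columns,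
the same column space as X_⋄, and XᵀD ⪰ 0. -/
theorem basis_matrix_form_converse {n k r : ℕ} (hrk : r ≤ k) (hkn : k ≤ n)
    (D Xd : Matrix (Fin n) (Fin k) ℝ)
    (hXd : Xdᵀ * Xd = 1) (hrank : (Xdᵀ * D).rank = r)
    (U V : Matrix (Fin k) (Fin k) ℝ) (hU : Uᵀ * U = 1) (hV : Vᵀ * V = 1)
    (sg : Fin r → ℝ) (hpos : ∀ i, 0 < sg i)
    (S : Matrix (Fin k) (Fin k) ℝ)
    (hS : ∀ i j : Fin k,
      S i j = if h : (i : ℕ) = (j : ℕ) ∧ (i : ℕ) < r then sg ⟨i, h.2⟩ else 0)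
    (hSVD : Xdᵀ * D = U * S * Vᵀ) :
    ∀ W : Matrix (Fin (k - r)) (Fin (k - r)) ℝ, Wᵀ * W = 1 →
      (Xd * headCols r hrk U * (headCols r hrk V)ᵀ +
          Xd * tailCols r hrk U * W * (tailCols r hrk V)ᵀ)ᵀ *
        (Xd * headCols r hrk U * (headCols r hrk V)ᵀ +
          Xd * tailCols r hrk U * W * (tailCols r hrk V)ᵀ) = 1 ∧
      LinearMap.range (Xd * headCols r hrk U * (headCols r hrk V)ᵀ +
          Xd * tailCols r hrk U * W * (tailCols r hrk V)ᵀ).mulVecLin =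
        LinearMap.range Xd.mulVecLin ∧
      ((Xd * headCols r hrk U * (headCols r hrk V)ᵀ +
          Xd * tailCols r hrk U * W * (tailCols r hrk V)ᵀ)ᵀ * D).PosSemidef := by
  intro W hW
  -- cancellation helpers
  have cXd : ∀ (p : ℕ) (B : Matrix (Fin k) (Fin p) ℝ), Xdᵀ * (Xd * B) = B := fun p B => by
    rw [← Matrix.mul_assoc, hXd, Matrix.one_mul]
  have cUU : ∀ (p : ℕ) (B : Matrix (Fin k) (Fin p) ℝ), Uᵀ * (U * B) = B := fun p B => by
    rw [← Matrix.mul_assoc, hU, Matrix.one_mul]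
  have cW : ∀ (p : ℕ) (B : Matrix (Fin (k - r)) (Fin p) ℝ), Wᵀ * (W * B) = B := fun p B => by
    rw [← Matrix.mul_assoc, hW, Matrix.one_mul]
  have cJhJh : ∀ (p : ℕ) (B : Matrix (Fin r) (Fin p) ℝ),
      (Jh hrk)ᵀ * (Jh hrk * B) = B := fun p B => by
    rw [← Matrix.mul_assoc, JhT_Jh hrk, Matrix.one_mul]
  have cJtJt : ∀ (p : ℕ) (B : Matrix (Fin (k - r)) (Fin p) ℝ),
      (Jt hrk)ᵀ * (Jt hrk * B) = B := fun p B => by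
    rw [← Matrix.mul_assoc, JtT_Jt hrk, Matrix.one_mul]
  have cJhJt : ∀ (p : ℕ) (B : Matrix (Fin (k - r)) (Fin p) ℝ),
      (Jh hrk)ᵀ * (Jt hrk * B) = 0 := fun p B => by
    rw [← Matrix.mul_assoc, JhT_Jt hrk, Matrix.zero_mul]
  have cJtJh : ∀ (p : ℕ) (B : Matrix (Fin r) (Fin p) ℝ),
      (Jt hrk)ᵀ * (Jh hrk * B) = 0 := fun p B => by
    rw [← Matrix.mul_assoc, JtT_Jh hrk, Matrix.zero_mul]
  have hVVt : V * Vᵀ = 1 := mul_eq_one_comm.mp hV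
  rw [headCols_mul hrk U, headCols_mul hrk V, tailCols_mul hrk U, tailCols_mul hrk V]
  -- the orthogonal factor
  set Q : Matrix (Fin k) (Fin k) ℝ :=
    U * Jh hrk * (V * Jh hrk)ᵀ + U * Jt hrk * W * (V * Jt hrk)ᵀ with hQdef
  have hXQ : Xd * (U * Jh hrk) * (V * Jh hrk)ᵀ + Xd * (U * Jt hrk) * W * (V * Jt hrk)ᵀ
      = Xd * Q := by
    rw [hQdef]
    simp only [Matrix.mul_add, Matrix.mul_assoc]
  have hfold : V * (Jh hrk * ((Jh hrk)ᵀ * Vᵀ)) + V * (Jt hrk * ((Jt hrk)ᵀ * Vᵀ)) = 1 := by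
    have h3 : V * (Jh hrk * ((Jh hrk)ᵀ * Vᵀ)) + V * (Jt hrk * ((Jt hrk)ᵀ * Vᵀ))
        = V * ((Jh hrk * (Jh hrk)ᵀ + Jt hrk * (Jt hrk)ᵀ) * Vᵀ) := by
      rw [Matrix.add_mul, Matrix.mul_add]
      simp only [Matrix.mul_assoc]
    rw [h3, Jsum hrk, Matrix.one_mul, hVVt]
  have hQ : Qᵀ * Q = 1 := by
    rw [hQdef]
    simp only [transpose_add, transpose_mul, transpose_transpose, Matrix.add_mul,
      Matrix.mul_add, Matrix.mul_assoc, cUU, cJhJh, cJtJt, cJhJt, cJtJh, cW,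
      Matrix.mul_zero, Matrix.zero_mul, add_zero, zero_add]
    exact hfold
  have hQQt : Q * Qᵀ = 1 := mul_eq_one_comm.mp hQ
  refine ⟨?_, ?_, ?_⟩
  · -- XᵀX = 1
    rw [hXQ, transpose_mul, Matrix.mul_assoc, ← Matrix.mul_assoc Xdᵀ, hXd, one_mul, hQ]
  · -- range
    rw [hXQ, Matrix.mulVecLin_mul]
    refine LinearMap.range_comp_of_range_eq_top _ (LinearMap.range_eq_top.mpr ?_)
    intro y
    refine ⟨Qᵀ *ᵥ y, ?_⟩
    rw [Matrix.mulVecLin_apply, Matrix.mulVec_mulVec, hQQt, Matrix.one_mulVec]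
  · -- PSD
    have hSJ : S = Jh hrk * Matrix.diagonal sg * (Jh hrk)ᵀ := by
      ext i j
      rw [hS i j]
      rw [Matrix.mul_apply]
      by_cases hij : (i : ℕ) = (j : ℕ) ∧ (i : ℕ) < r
      · rw [dif_pos hij]
        rw [Finset.sum_eq_single (⟨(i : ℕ), hij.2⟩ : Fin r)]
        · simp [Jh, Matrix.mul_diagonal, Matrix.one_apply, Fin.ext_iff, hij.1]
        · intro b _ hb
          simp only [Jh, Matrix.mul_diagonal, transpose_apply, submatrix_apply, id_eq,
            Matrix.one_apply]
          rw [if_neg]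
          · simp
          · rw [Fin.ext_iff]
            simp only [Fin.coe_castLE]
            intro h
            exact hb (by ext; simp [← h])
        · intro h
          exact absurd (Finset.mem_univ _) h
      · rw [dif_neg hij]
        symm
        refine Finset.sum_eq_zero fun b _ => ?_
        simp only [Jh, Matrix.mul_diagonal, transpose_apply, submatrix_apply, id_eq,
          Matrix.one_apply]
        by_cases h1 : i = Fin.castLE hrk b
        · rw [if_pos h1, if_neg]
          · simp
          · rw [Fin.ext_iff]
            simp only [Fin.coe_castLE]
            intro h2
            refine hij ⟨?_, ?_⟩
            · simp only [h1, Fin.coe_castLE]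
              omega
            · simp only [h1, Fin.coe_castLE]
              omega
        · rw [if_neg h1, zero_mul, zero_mul]
    have hSVD' : Xdᵀ * D = U * (Jh hrk * (Matrix.diagonal sg * ((Jh hrk)ᵀ * Vᵀ))) := by
      rw [hSVD, hSJ]
      simp only [Matrix.mul_assoc]
    have hXD : (Xd * (U * Jh hrk) * (V * Jh hrk)ᵀ
          + Xd * (U * Jt hrk) * W * (V * Jt hrk)ᵀ)ᵀ * D
        = (V * Jh hrk) * Matrix.diagonal sg * (V * Jh hrk)ᵀ := by
      simp only [transpose_add, transpose_mul, transpose_transpose, Matrix.add_mul,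
        Matrix.mul_assoc, hSVD', cUU, cJhJh, cJtJt, cJhJt, cJtJh, cW,
        Matrix.mul_zero, Matrix.zero_mul, add_zero, zero_add]
    rw [hXD]
    have hdiag : Matrix.PosSemidef (Matrix.diagonal sg) :=
      Matrix.PosSemidef.diagonal (fun i => (hpos i).le)
    have := hdiag.mul_mul_conjTranspose_same (V * Jh hrk)
    have hconj : (V * Jh hrk)ᴴ = (V * Jh hrk)ᵀ := by
      ext i j
      simp [Matrix.conjTranspose_apply]
    rwa [hconj] at this
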